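/- Let G be a finite (or more generally locally finite) k-regular bipartite graph with parts A and B, k ≥ 2, and let M be a matching in G with no augmenting paths of length ≤ K, where K is odd. Define Y_0 ⊆ A ∪ B to be the set of M-uncovered vertices, Y_i = N_G(Y_{i−1}) for odd i, and Y_i = N_M(Y_{i−1}) for even i (where N_G denotes graph neighbourhood and N_M denotes the set of M-partners). Then, measuring sets by cardinality: |Y_1| ≥ (k/(k−1))|Y_0|, and for each odd i with 1 < i ≤ K, k|Y_i| ≥ (k + (i−1)/2)|Y_1|; consequently |Y_K| ≥ (1 + (K−1)/(2k))·((k+1)/k)·|Y_0|. -/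

import Mathlib

variable {V : Type*}

/-- The list of edges of a path given by its list of vertices. -/
def pathEdges (p : List V) : List (Sym2 V) :=
  List.zipWith (fun a b => s(a, b)) p p.tail

/-- `M` is a matching in `G`: a set of edges of `G` no two of which share a vertex. -/
def IsMatching (G : SimpleGraph V) (M : Set (Sym2 V)) : Prop :=
  M ⊆ G.edgeSet ∧ ∀ e ∈ M, ∀ f ∈ M, e ≠ f → ∀ v : V, v ∈ e → v ∉ f

/-- A vertex is covered by `M` if it is incident with some edge of `M`. -/
def Covered (M : Set (Sym2 V)) (v : V) : Prop :=
  ∃ e ∈ M, v ∈ e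

/-- `p` (a list of vertices) is an augmenting path for the matching `M` in `G`:
a simple path whose edges alternate out of/in `M` (starting and ending with a
non-matching edge, so it has an odd number of edges, i.e. an even number of
vertices) and whose endpoints are uncovered by `M`. -/
def IsAugPath (G : SimpleGraph V) (M : Set (Sym2 V)) (p : List V) : Prop :=
  p.Nodup ∧ p.Chain' G.Adj ∧ 2 ≤ p.length ∧ p.length % 2 = 0 ∧
  (∀ (i : ℕ) (h : i < (pathEdges p).length),
      ((pathEdges p).get ⟨i, h⟩ ∈ M ↔ i % 2 = 1)) ∧
  (∀ v : V, p.head? = some v ∨ p.getLast? = some v → ¬ Covered M v)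

open scoped Classical

/-- Graph neighbourhood of a finite set of vertices. -/
noncomputable def NG [Fintype V] (G : SimpleGraph V) (S : Finset V) : Finset V :=
  Finset.univ.filter fun v => ∃ u ∈ S, G.Adj u v

/-- Set of `M`-partners of a finite set of vertices. -/
noncomputable def NM [Fintype V] (M : Set (Sym2 V)) (S : Finset V) : Finset V :=
  Finset.univ.filter fun v => ∃ u ∈ S, s(u, v) ∈ M

/-- The set of vertices not covered by `M`. -/
noncomputable def uncov [Fintype V] (M : Set (Sym2 V)) : Finset V :=
  Finset.univ.filter fun v => ¬ Covered M v

/-- The sequence `Y_0 = ` uncovered vertices, `Y_i = N_G(Y_{i-1})` for odd `i`,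
`Y_i = N_M(Y_{i-1})` for even `i > 0`. -/
noncomputable def Ychain [Fintype V] (G : SimpleGraph V) (M : Set (Sym2 V)) : ℕ → Finset V
  | 0 => uncov M
  | i + 1 => if (i + 1) % 2 = 1 then NG G (Ychain G M i) else NM M (Ychain G M i)


section Aux

variable {G : SimpleGraph V} {M : Set (Sym2 V)}

def AW (G : SimpleGraph V) (M : Set (Sym2 V)) : Bool → List V → Prop
  | _, [] => False
  | _, [v] => ¬ Covered M v
  | b, v :: w :: l => G.Adj v w ∧ (s(v, w) ∈ M ↔ b = true) ∧ AW G M (!b) (w :: l)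

variable {G : SimpleGraph V} {M : Set (Sym2 V)}

lemma AW_ne_nil {b : Bool} {p : List V} (h : AW G M b p) : p ≠ [] := by
  cases p with
  | nil => exact absurd h (by simp [AW])
  | cons v l => simp

lemma AW_chain' {b : Bool} {p : List V} (h : AW G M b p) : p.Chain' G.Adj := by
  induction p generalizing b with
  | nil => exact List.isChain_nil
  | cons v l ih =>
    cases l with
    | nil => exact List.isChain_singleton _
    | cons w l' =>
      obtain ⟨hadj, _, haw⟩ := h
      exact List.isChain_cons_cons.mpr ⟨hadj, ih haw⟩

lemma AW_last {b : Bool} {p : List V} (h : AW G M b p) :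
    ∀ v, p.getLast? = some v → ¬ Covered M v := by
  induction p generalizing b with
  | nil => simp
  | cons v l ih =>
    cases l with
    | nil => intro u hu; simp at hu; subst hu; exact h
    | cons w l' =>
      obtain ⟨_, _, haw⟩ := h
      intro u hu
      rw [List.getLast?_cons_cons] at hu
      exact ih haw u hu

lemma pathEdges_cons_cons (a b : V) (l : List V) :
    pathEdges (a :: b :: l) = s(a, b) :: pathEdges (b :: l) := by
  simp [pathEdges]

lemma pathEdges_length (p : List V) : (pathEdges p).length = p.length - 1 := by
  cases p with
  | nil => simp [pathEdges]
  | cons a l => simp [pathEdges]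

lemma AW_edges {b : Bool} {p : List V} (h : AW G M b p) :
    ∀ (i : ℕ) (hi : i < (pathEdges p).length),
      ((pathEdges p).get ⟨i, hi⟩ ∈ M ↔ (i + (bif b then 1 else 0)) % 2 = 1) := by
  induction p generalizing b with
  | nil => intro i hi; simp [pathEdges] at hi
  | cons v l ih =>
    cases l with
    | nil => intro i hi; simp [pathEdges] at hi
    | cons w l' =>
      obtain ⟨hadj, hmem, haw⟩ := h
      intro i hi
      match i with
      | 0 =>
        have hg : (pathEdges (v :: w :: l')).get ⟨0, hi⟩ = s(v, w) := by
          simp [pathEdges_cons_cons]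
        rw [hg]
        cases b <;> simp_all
      | Nat.succ j =>
        have hj : j < (pathEdges (w :: l')).length := by
          have := hi; rw [pathEdges_cons_cons] at this; simpa using this
        have hg : (pathEdges (v :: w :: l')).get ⟨j + 1, hi⟩
            = (pathEdges (w :: l')).get ⟨j, hj⟩ := by
          simp [pathEdges_cons_cons]
        rw [hg]
        have := ih haw j hj
        cases b <;> simp_all [Nat.succ_mod_two_eq_one_iff, Nat.succ_mod_two_eq_zero_iff]

section Sides

variable {A B : Finset V}

lemma adj_side (hAB : ∀ v : V, ¬(v ∈ A ∧ v ∈ B))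
    (hbip : ∀ u v : V, G.Adj u v → (u ∈ A ∧ v ∈ B) ∨ (u ∈ B ∧ v ∈ A))
    {u v : V} (h : G.Adj u v) : u ∈ A ↔ v ∉ A := by
  rcases hbip u v h with ⟨hu, hv⟩ | ⟨hu, hv⟩
  · exact ⟨fun _ hvA => hAB v ⟨hvA, hv⟩, fun _ => hu⟩
  · exact ⟨fun huA => absurd ⟨huA, hu⟩ (hAB u), fun hvA => absurd hv hvA⟩

lemma chain_side (hAB : ∀ v : V, ¬(v ∈ A ∧ v ∈ B))
    (hbip : ∀ u v : V, G.Adj u v → (u ∈ A ∧ v ∈ B) ∨ (u ∈ B ∧ v ∈ A))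
    {p : List V} (hc : p.Chain' G.Adj) (h0 : 0 < p.length) :
    ∀ (i : ℕ) (hi : i < p.length),
      (p.get ⟨i, hi⟩ ∈ A ↔ (p.get ⟨0, h0⟩ ∈ A ↔ i % 2 = 0)) := by
  intro i
  induction i with
  | zero => intro hi; simp
  | succ j ihj =>
    intro hi
    have hj : j < p.length := Nat.lt_of_succ_lt hi
    have hadj : G.Adj (p.get ⟨j, hj⟩) (p.get ⟨j + 1, hi⟩) :=
      List.isChain_iff_getElem.mp hc j (by omega)
    have hside := adj_side hAB hbip hadj
    have := ihj hj
    rcases Nat.even_or_odd j with hj2 | hj2 <;>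
      [ (have e1 : j % 2 = 0 := Nat.even_iff.mp hj2;
         have e2 : ¬ ((j+1) % 2 = 0) := by omega);
        (have e1 : ¬ (j % 2 = 0) := by
           have := Nat.odd_iff.mp hj2; omega;
         have e2 : (j+1) % 2 = 0 := by have := Nat.odd_iff.mp hj2; omega)] <;>
      simp [e1, e2] at this ⊢ <;> tauto

lemma dup_parity (hAB : ∀ v : V, ¬(v ∈ A ∧ v ∈ B))
    (hbip : ∀ u v : V, G.Adj u v → (u ∈ A ∧ v ∈ B) ∨ (u ∈ B ∧ v ∈ A))
    {p : List V} (hc : p.Chain' G.Adj) {a b : ℕ} (ha : a < p.length) (hb : b < p.length)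
    (heq : p.get ⟨a, ha⟩ = p.get ⟨b, hb⟩) : a % 2 = b % 2 := by
  have h0 : 0 < p.length := by omega
  have h1 := chain_side hAB hbip hc h0 a ha
  have h2 := chain_side hAB hbip hc h0 b hb
  rw [heq] at h1
  by_contra hne
  rcases Nat.mod_two_eq_zero_or_one a with e | e <;>
    rcases Nat.mod_two_eq_zero_or_one b with f | f <;>
      simp [e, f] at h1 h2 hne <;> tauto

end Sides

lemma AW_tail {b : Bool} {v : V} {l : List V} (h : AW G M b (v :: l)) (hl : l ≠ []) :
    AW G M (!b) l := by
  cases l with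
  | nil => exact absurd rfl hl
  | cons w l' => exact h.2.2

lemma AW_drop : ∀ (t : ℕ) {p : List V} {b : Bool}, t < p.length → AW G M b p →
    AW G M (if t % 2 = 1 then !b else b) (p.drop t) := by
  intro t
  induction t with
  | zero => intro p b _ h; simpa using h
  | succ j ihj =>
    intro p b ht h
    cases p with
    | nil => simp at ht
    | cons v l =>
      have hl : l ≠ [] := by
        intro e; subst e; simp at ht
      have hlen : j < l.length := by simpa using ht
      have hd := ihj hlen (AW_tail h hl)
      rw [List.drop_succ_cons]
      rcases Nat.mod_two_eq_zero_or_one j with e | e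
      · have e2 : (j+1) % 2 = 1 := by omega
        rw [if_pos e2]
        rw [if_neg (by omega)] at hd
        exact hd
      · have e2 : ¬ ((j+1) % 2 = 1) := by omega
        rw [if_neg e2]
        rw [if_pos e] at hd
        simpa using hd

lemma AW_cons {b : Bool} {v w : V} {T : List V} (h1 : G.Adj v w)
    (h2 : s(v, w) ∈ M ↔ b = true) (h3 : T.head? = some w) (h4 : AW G M (!b) T) :
    AW G M b (v :: T) := by
  cases T with
  | nil => simp at h3
  | cons x T' =>
    simp at h3
    subst h3
    exact ⟨h1, h2, h4⟩

lemma head?_eq_get {p : List V} (h : 0 < p.length) : p.head? = some (p.get ⟨0, h⟩) := by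
  cases p with
  | nil => simp at h
  | cons v l => rfl

lemma head?_drop_get {p : List V} {c : ℕ} (hc : c < p.length) :
    (p.drop c).head? = some (p.get ⟨c, hc⟩) := by
  rw [List.head?_drop]
  simp [List.getElem?_eq_getElem hc]

lemma AW_splice : ∀ (a : ℕ) {p : List V} {bo : Bool} {c : ℕ} (ha : a < p.length)
    (hc : c < p.length), AW G M bo p → a ≤ c → p.get ⟨a, ha⟩ = p.get ⟨c, hc⟩ →
    a % 2 = c % 2 → AW G M bo (p.take a ++ p.drop c) := by
  intro a
  induction a with
  | zero =>
    intro p bo c ha hc h _ heq hpar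
    simp only [List.take_zero, List.nil_append]
    have hd := AW_drop c hc h
    rw [if_neg (by omega)] at hd
    exact hd
  | succ n ihn =>
    intro p bo c ha hc h hac heq hpar
    cases p with
    | nil => simp at ha
    | cons v l =>
      obtain ⟨d, rfl⟩ : ∃ d, c = d + 1 := ⟨c - 1, by omega⟩
      have hd : d < l.length := by simpa using hc
      have hn : n < l.length := by simpa using ha
      cases l with
      | nil => simp at hd
      | cons w l' =>
        obtain ⟨hadj, hmem, haw⟩ := h
        have heq' : (w :: l').get ⟨n, hn⟩ = (w :: l').get ⟨d, hd⟩ := by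
          simpa using heq
        have hT := ihn hn hd haw (by omega) heq' (by omega)
        rw [List.take_succ_cons, List.drop_succ_cons, List.cons_append]
        refine AW_cons hadj hmem ?_ hT
        cases n with
        | zero =>
          have h0 : (0 : ℕ) < (w :: l').length := by simp
          have : (w :: l').get ⟨d, hd⟩ = w := by
            rw [← heq']; rfl
          simp only [List.take_zero, List.nil_append]
          rw [head?_drop_get hd, this]
        | succ m =>
          rw [List.take_succ_cons, List.cons_append]
          rfl

lemma AW_isAugPath {p : List V} (h : AW G M false p) (hnd : p.Nodup)
    (hlen : 2 ≤ p.length) (hpar : p.length % 2 = 0)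
    (hhead : ∀ v, p.head? = some v → ¬ Covered M v) : IsAugPath G M p := by
  refine ⟨hnd, AW_chain' h, hlen, hpar, ?_, ?_⟩
  · intro i hi
    have := AW_edges h i hi
    simpa using this
  · intro v hv
    rcases hv with hv | hv
    · exact hhead v hv
    · exact AW_last h v hv

lemma exists_aug_of_AW {A B : Finset V}
    (hAB : ∀ v : V, ¬(v ∈ A ∧ v ∈ B))
    (hbip : ∀ u v : V, G.Adj u v → (u ∈ A ∧ v ∈ B) ∨ (u ∈ B ∧ v ∈ A)) :
    ∀ (n : ℕ) (p : List V), p.length ≤ n → AW G M false p → 2 ≤ p.length →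
    p.length % 2 = 0 → (∀ v, p.head? = some v → ¬ Covered M v) →
    ∃ q, IsAugPath G M q ∧ q.length ≤ p.length := by
  intro n
  induction n with
  | zero => intro p hn _ hlen _ _; omega
  | succ n ih =>
    intro p hn h hlen hpar hhead
    by_cases hnd : p.Nodup
    · exact ⟨p, AW_isAugPath h hnd hlen hpar hhead, le_refl _⟩
    · rw [List.nodup_iff_injective_get] at hnd
      unfold Function.Injective at hnd
      push_neg at hnd
      obtain ⟨i, j, hij, hne⟩ := hnd
      -- wlog a < b
      obtain ⟨a, b, ha, hb, hab, heq⟩ :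
          ∃ (a b : ℕ) (ha : a < p.length) (hb : b < p.length), a < b ∧
            p.get ⟨a, ha⟩ = p.get ⟨b, hb⟩ := by
        rcases lt_or_gt_of_ne (Fin.val_ne_of_ne hne) with hlt | hgt
        · exact ⟨i.1, j.1, i.2, j.2, hlt, by simpa using hij⟩
        · exact ⟨j.1, i.1, j.2, i.2, hgt, by simp only [List.get_eq_getElem] at hij ⊢; rw [hij]⟩
      have hpar2 : a % 2 = b % 2 := dup_parity hAB hbip (AW_chain' h) ha hb heq
      have hspl := AW_splice a ha hb h (le_of_lt hab) heq hpar2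
      set q' : List V := p.take a ++ p.drop b with hq'
      have hlq : q'.length = a + (p.length - b) := by
        simp [hq', List.length_take, List.length_drop]
        omega
      have hq'head : q'.head? = p.head? := by
        cases a with
        | zero =>
          have h0 : 0 < p.length := by omega
          have : p.get ⟨0, h0⟩ = p.get ⟨b, hb⟩ := heq
          simp only [hq', List.take_zero, List.nil_append]
          rw [head?_drop_get hb, ← this, ← head?_eq_get h0]
        | succ m =>
          cases p with
          | nil => simp at ha
          | cons v l => simp [hq', List.take_succ_cons]
      refine ih q' (by omega) hspl (by omega) (by omega) ?_ |>.imp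
        fun q ⟨hq1, hq2⟩ => ⟨hq1, by omega⟩
      intro v hv
      rw [hq'head] at hv
      exact hhead v hv

section YL

variable [Fintype V]

lemma mem_NG {S : Finset V} {v : V} : v ∈ NG G S ↔ ∃ u ∈ S, G.Adj u v := by
  simp [NG]

lemma mem_NM {S : Finset V} {v : V} : v ∈ NM M S ↔ ∃ u ∈ S, s(u, v) ∈ M := by
  simp [NM]

lemma mem_uncov {v : V} : v ∈ uncov M ↔ ¬ Covered M v := by
  simp [uncov]

lemma Ychain_succ_odd {i : ℕ} (h : (i + 1) % 2 = 1) :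
    Ychain G M (i + 1) = NG G (Ychain G M i) := by
  rw [Ychain, if_pos h]

lemma Ychain_succ_even {i : ℕ} (h : (i + 1) % 2 = 0) :
    Ychain G M (i + 1) = NM M (Ychain G M i) := by
  rw [Ychain, if_neg (by omega)]

lemma matching_eq (hM : IsMatching G M) {e f : Sym2 V} (he : e ∈ M) (hf : f ∈ M)
    {v : V} (hve : v ∈ e) (hvf : v ∈ f) : e = f := by
  by_contra hne
  exact hM.2 e he f hf hne v hve hvf

lemma matching_adj (hM : IsMatching G M) {u v : V} (h : s(u, v) ∈ M) : G.Adj u v :=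
  (SimpleGraph.mem_edgeSet G).mp (hM.1 h)

lemma matching_right_unique (hM : IsMatching G M) {u w v : V}
    (h1 : s(u, v) ∈ M) (h2 : s(w, v) ∈ M) : u = w := by
  have he := matching_eq hM h1 h2 (Sym2.mem_mk_right u v) (Sym2.mem_mk_right w v)
  rw [Sym2.eq_iff] at he
  rcases he with ⟨h, -⟩ | ⟨h, h'⟩
  · exact h
  · exfalso
    exact (matching_adj hM h1).ne h

lemma matching_left_unique (hM : IsMatching G M) {u v w : V}
    (h1 : s(u, v) ∈ M) (h2 : s(u, w) ∈ M) : v = w :=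
  matching_right_unique hM (Sym2.eq_swap ▸ h1) (Sym2.eq_swap ▸ h2)

noncomputable def partner (M : Set (Sym2 V)) (v : V) : V :=
  if h : Covered M v then Sym2.Mem.other h.choose_spec.2 else v

lemma partner_spec {v : V} (h : Covered M v) : s(v, partner M v) ∈ M := by
  rw [partner, dif_pos h]
  rw [Sym2.other_spec h.choose_spec.2]
  exact h.choose_spec.1

lemma partner_eq (hM : IsMatching G M) {u v : V} (h : s(v, u) ∈ M) : partner M v = u := by
  have hc : Covered M v := ⟨s(v, u), h, Sym2.mem_mk_left v u⟩
  exact matching_left_unique hM (partner_spec hc) h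

lemma covered_of_mem_NM {S : Finset V} {v : V} (h : v ∈ NM M S) : Covered M v := by
  obtain ⟨u, -, hu⟩ := mem_NM.mp h
  exact ⟨s(u, v), hu, Sym2.mem_mk_right u v⟩

lemma NM_card (hM : IsMatching G M) {S : Finset V} (hcov : ∀ v ∈ S, Covered M v) :
    (NM M S).card = S.card := by
  symm
  apply Finset.card_bij (fun a _ => partner M a)
  · intro a ha
    exact mem_NM.mpr ⟨a, ha, partner_spec (hcov a ha)⟩
  · intro a ha a' ha' he
    exact matching_right_unique hM (he ▸ partner_spec (hcov a ha)) (partner_spec (hcov a' ha'))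
  · intro v hv
    obtain ⟨u, hu, huv⟩ := mem_NM.mp hv
    exact ⟨u, hu, partner_eq hM huv⟩

end YL

section Walks

variable [Fintype V]

lemma AW_two {w u : V} (hadj : G.Adj w u) (hmem : s(w, u) ∉ M) (hunc : ¬ Covered M u) :
    AW G M false [w, u] :=
  ⟨hadj, by simpa using hmem, hunc⟩

lemma exists_walk (hM : IsMatching G M) :
    ∀ j : ℕ, j % 2 = 1 → ∀ w ∈ Ychain G M j, ∃ p : List V,
      AW G M false p ∧ p.head? = some w ∧ 2 ≤ p.length ∧ p.length % 2 = 0 ∧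
      p.length ≤ j + 1 := by
  intro j
  induction j using Nat.strong_induction_on with
  | _ j ih =>
    intro hj w hw
    match j, hj with
    | 1, _ =>
      rw [show (1:ℕ) = 0 + 1 from rfl, Ychain_succ_odd (by norm_num)] at hw
      obtain ⟨u, hu, hadj⟩ := mem_NG.mp hw
      have hunc : ¬ Covered M u := mem_uncov.mp hu
      have hnm : s(w, u) ∉ M := fun h => hunc ⟨s(w, u), h, Sym2.mem_mk_right w u⟩
      exact ⟨[w, u], AW_two hadj.symm hnm hunc, rfl, by simp, by simp, by simp⟩
    | (m + 3), hj =>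
      have hm2 : (m + 2) % 2 = 0 := by omega
      have hm1 : (m + 1) % 2 = 1 := by omega
      rw [show m + 3 = (m + 2) + 1 from rfl, Ychain_succ_odd (by omega)] at hw
      have hY2 : Ychain G M (m + 2) = NM M (Ychain G M (m + 1)) :=
        Ychain_succ_even hm2
      by_cases hcase : ∃ u ∈ Ychain G M (m + 2), G.Adj w u ∧ s(w, u) ∉ M
      · obtain ⟨u, hu, hadj, hnm⟩ := hcase
        obtain ⟨w', hw', hMw'⟩ := mem_NM.mp (hY2 ▸ hu)
        obtain ⟨q, hq, hqh, hql2, hqlp, hqle⟩ := ih (m + 1) (by omega) hm1 w' hw'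
        refine ⟨w :: u :: q, ?_, rfl, by simp, ?_, ?_⟩
        · refine AW_cons hadj (by simpa using hnm) rfl ?_
          refine AW_cons (matching_adj hM hMw').symm (by simp [Sym2.eq_swap ▸ hMw']) hqh ?_
          simpa using hq
        · simp only [List.length_cons]; omega
        · simp only [List.length_cons]; omega
      · push_neg at hcase
        obtain ⟨u, hu, hadj⟩ := mem_NG.mp hw
        have hM1 : s(w, u) ∈ M := hcase u hu hadj.symm
        obtain ⟨w', hw', hMw'⟩ := mem_NM.mp (hY2 ▸ hu)
        have : w = w' := matching_right_unique hM hM1 hMw'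
        obtain ⟨q, hq, hqh, hql2, hqlp, hqle⟩ := ih (m + 1) (by omega) hm1 w (this ▸ hw')
        exact ⟨q, hq, hqh, hql2, hqlp, by omega⟩

lemma covered_Ychain {A B : Finset V}
    (hAB : ∀ v : V, ¬(v ∈ A ∧ v ∈ B))
    (hbip : ∀ u v : V, G.Adj u v → (u ∈ A ∧ v ∈ B) ∨ (u ∈ B ∧ v ∈ A))
    (hM : IsMatching G M) {K : ℕ}
    (hno : ∀ p : List V, IsAugPath G M p → ¬(p.length ≤ K + 1))
    {j : ℕ} (hj : j % 2 = 1) (hjK : j ≤ K) :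
    ∀ v ∈ Ychain G M j, Covered M v := by
  intro v hv
  by_contra hunc
  obtain ⟨p, hp, hph, hpl2, hplp, hple⟩ := exists_walk hM j hj v hv
  have hhead : ∀ u, p.head? = some u → ¬ Covered M u := by
    intro u hu
    rw [hph] at hu
    injection hu with hu
    exact hu ▸ hunc
  obtain ⟨q, hq, hqle⟩ := exists_aug_of_AW hAB hbip p.length p le_rfl hp hpl2 hplp hhead
  exact hno q hq (by omega)

end Walks

section Count

variable [Fintype V] [DecidableEq V] {k : ℕ}

lemma card_sigma_nbhd [DecidableRel G.Adj] (hreg : ∀ v : V, G.degree v = k)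
    (S : Finset V) :
    (S.sigma fun _u : V => G.neighborFinset _u).card = k * S.card := by
  rw [Finset.card_sigma]
  have : ∀ u : V, (G.neighborFinset u).card = k := fun u => by
    rw [SimpleGraph.card_neighborFinset_eq_degree]; exact hreg u
  rw [Finset.sum_congr rfl fun u _ => this u, Finset.sum_const, smul_eq_mul, mul_comm]

lemma sigma_swap_injOn (T : Finset (Σ _ : V, V)) :
    Set.InjOn (fun x : Σ _ : V, V => (⟨x.2, x.1⟩ : Σ _ : V, V)) T := by
  rintro ⟨a, b⟩ - ⟨c, d⟩ - h
  simp only [Sigma.mk.inj_iff, heq_eq_eq] at h ⊢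
  exact ⟨h.2, h.1⟩

end Count

section Main

variable [Fintype V] [DecidableEq V] {k : ℕ}

lemma Ychain_zero : Ychain G M 0 = uncov M := rfl

lemma Ychain_one : Ychain G M 1 = NG G (Ychain G M 0) :=
  Ychain_succ_odd (by norm_num)

lemma nest_step (hM : IsMatching G M) {j : ℕ} (hj : j % 2 = 1)
    (hcov : ∀ v ∈ Ychain G M j, Covered M v) :
    Ychain G M j ⊆ Ychain G M (j + 2) := by
  intro v hv
  have hc := hcov v hv
  have hp := partner_spec hc
  have h1 : partner M v ∈ Ychain G M (j + 1) := by
    rw [Ychain_succ_even (by omega)]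
    exact mem_NM.mpr ⟨v, hv, hp⟩
  rw [show j + 2 = (j + 1) + 1 from rfl, Ychain_succ_odd (by omega)]
  exact mem_NG.mpr ⟨partner M v, h1, (matching_adj hM hp).symm⟩

lemma count_step [DecidableRel G.Adj] (hreg : ∀ v : V, G.degree v = k)
    (hM : IsMatching G M) {j : ℕ} (hj : j % 2 = 1)
    (hsub : Ychain G M 1 ⊆ Ychain G M (j + 2))
    (hcov : ∀ v ∈ Ychain G M j, Covered M v) :
    k * ((Ychain G M 0).card + (Ychain G M j).card) ≤ k * (Ychain G M (j + 2)).card := by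
  have hY1 : Ychain G M (j + 1) = NM M (Ychain G M j) := Ychain_succ_even (by omega)
  have hY2 : Ychain G M (j + 2) = NG G (Ychain G M (j + 1)) :=
    Ychain_succ_odd (by omega)
  have hcard1 : (Ychain G M (j + 1)).card = (Ychain G M j).card := by
    rw [hY1, NM_card hM hcov]
  have hdisj : Disjoint (Ychain G M 0) (Ychain G M (j + 1)) := by
    rw [Finset.disjoint_left]
    intro v hv0 hv1
    rw [Ychain_zero] at hv0
    exact (mem_uncov.mp hv0) (covered_of_mem_NM (hY1 ▸ hv1))
  have hL : (((Ychain G M 0) ∪ (Ychain G M (j + 1))).sigma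
      fun u : V => G.neighborFinset u).card
      = k * ((Ychain G M 0).card + (Ychain G M j).card) := by
    rw [card_sigma_nbhd hreg, Finset.card_union_of_disjoint hdisj, hcard1]
  have hR := card_sigma_nbhd (G := G) hreg (Ychain G M (j + 2))
  rw [← hL, ← hR]
  apply Finset.card_le_card_of_injOn _ _ (sigma_swap_injOn _)
  rintro ⟨u, w⟩ hx
  rw [Finset.mem_coe, Finset.mem_sigma] at hx
  obtain ⟨hu, hw⟩ := hx
  have hadj : G.Adj u w := (G.mem_neighborFinset _ _).mp hw
  rw [Finset.mem_coe, Finset.mem_sigma]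
  constructor
  · rcases Finset.mem_union.mp hu with h0 | h1
    · exact hsub (by rw [Ychain_one]; exact mem_NG.mpr ⟨u, h0, hadj⟩)
    · rw [hY2]; exact mem_NG.mpr ⟨u, h1, hadj⟩
  · exact (G.mem_neighborFinset _ _).mpr hadj.symm

lemma Y1_le_k_Y0 [DecidableRel G.Adj] (hreg : ∀ v : V, G.degree v = k) :
    (Ychain G M 1).card ≤ k * (Ychain G M 0).card := by
  rw [← card_sigma_nbhd (G := G) hreg (Ychain G M 0)]
  apply Finset.card_le_card_of_injOn
    (fun w : V => if h : w ∈ NG G (Ychain G M 0) then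
      (⟨(mem_NG.mp h).choose, w⟩ : Σ _ : V, V) else ⟨w, w⟩)
  · intro w hw
    rw [Ychain_one] at hw
    simp only [Finset.mem_coe] at hw ⊢
    rw [dif_pos hw, Finset.mem_sigma]
    obtain ⟨h1, h2⟩ := (mem_NG.mp hw).choose_spec
    exact ⟨h1, (G.mem_neighborFinset _ _).mpr h2⟩
  · intro w hw w' hw' he
    rw [Ychain_one] at hw hw'
    dsimp only at he
    rw [dif_pos (Finset.mem_coe.mp hw), dif_pos (Finset.mem_coe.mp hw')] at he
    simpa using congrArg (fun x : Σ _ : V, V => x.2) he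

lemma claim1 [DecidableRel G.Adj] (hreg : ∀ v : V, G.degree v = k)
    (hM : IsMatching G M) (hcov1 : ∀ v ∈ Ychain G M 1, Covered M v) :
    k * (Ychain G M 0).card ≤ (k - 1) * (Ychain G M 1).card := by
  have hR : ((Ychain G M 1).sigma
      fun w : V => (G.neighborFinset w).erase (partner M w)).card
      = (k - 1) * (Ychain G M 1).card := by
    rw [Finset.card_sigma]
    rw [Finset.sum_congr rfl fun w hw => ?_, Finset.sum_const, smul_eq_mul, mul_comm]
    rw [Finset.card_erase_of_mem, SimpleGraph.card_neighborFinset_eq_degree, hreg]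
    exact (G.mem_neighborFinset _ _).mpr (matching_adj hM (partner_spec (hcov1 w hw)))
  rw [← hR, ← card_sigma_nbhd (G := G) hreg (Ychain G M 0)]
  apply Finset.card_le_card_of_injOn _ _ (sigma_swap_injOn _)
  rintro ⟨u, w⟩ hx
  rw [Finset.mem_coe, Finset.mem_sigma] at hx
  obtain ⟨hu, hw⟩ := hx
  have hadj : G.Adj u w := (G.mem_neighborFinset _ _).mp hw
  have hw1 : w ∈ Ychain G M 1 := by
    rw [Ychain_one]; exact mem_NG.mpr ⟨u, hu, hadj⟩
  rw [Finset.mem_coe, Finset.mem_sigma]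
  refine ⟨hw1, Finset.mem_erase.mpr ⟨?_, (G.mem_neighborFinset _ _).mpr hadj.symm⟩⟩
  intro he
  have := partner_spec (hcov1 w hw1)
  rw [← he] at this
  have : Covered M u := ⟨s(w, u), this, Sym2.mem_mk_right w u⟩
  rw [Ychain_zero] at hu
  exact (mem_uncov.mp hu) this

end Main


end Aux

/-- in a `k`-regular bipartite graph (`k ≥ 2`), if `M` is a matching
with no augmenting paths of length `≤ K` (edges; i.e. at most `K+1` vertices),
`K` odd, then `|Y_1| ≥ (k/(k-1))|Y_0|`; for each odd `i` with `1 < i ≤ K`,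
`k|Y_i| ≥ (k + (i-1)/2)|Y_1|`; and `|Y_K| ≥ (1 + (K-1)/(2k))((k+1)/k)|Y_0|`
(all inequalities cleared of denominators). -/
theorem Ychain_card_bounds [Fintype V] [DecidableEq V]
    (G : SimpleGraph V) [DecidableRel G.Adj] (A B : Finset V)
    (hpart : ∀ v : V, v ∈ A ∨ v ∈ B) (hAB : ∀ v : V, ¬(v ∈ A ∧ v ∈ B))
    (hbip : ∀ u v : V, G.Adj u v → (u ∈ A ∧ v ∈ B) ∨ (u ∈ B ∧ v ∈ A))
    (k : ℕ) (hk : 2 ≤ k) (hreg : ∀ v : V, G.degree v = k)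
    (M : Set (Sym2 V)) (hM : IsMatching G M)
    (K : ℕ) (hK : K % 2 = 1)
    (hno : ∀ p : List V, IsAugPath G M p → ¬(p.length ≤ K + 1)) :
    k * (Ychain G M 0).card ≤ (k - 1) * (Ychain G M 1).card ∧
    (∀ i : ℕ, i % 2 = 1 → 1 < i → i ≤ K →
      (2 * k + (i - 1)) * (Ychain G M 1).card ≤ 2 * k * (Ychain G M i).card) ∧
    (2 * k + (K - 1)) * (k + 1) * (Ychain G M 0).card ≤
      2 * k * k * (Ychain G M K).card := by
  have hK1 : 1 ≤ K := by omega
  have hcov : ∀ j : ℕ, j % 2 = 1 → j ≤ K → ∀ v ∈ Ychain G M j, Covered M v :=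
    fun j hj hjK => covered_Ychain hAB hbip hM hno hj hjK
  -- nesting : Y1 ⊆ Y_{2m+1} for 2m+1 ≤ K
  have hsub : ∀ m : ℕ, 2 * m + 1 ≤ K → Ychain G M 1 ⊆ Ychain G M (2 * m + 1) := by
    intro m
    induction m with
    | zero => intro _; norm_num
    | succ n ihn =>
      intro hle
      have h1 : 2 * n + 1 ≤ K := by omega
      refine (ihn h1).trans ?_
      have := nest_step (G := G) hM (j := 2 * n + 1) (by omega)
        (hcov (2 * n + 1) (by omega) h1)
      rw [show 2 * n + 1 + 2 = 2 * (n + 1) + 1 by ring] at this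
      exact this
  -- claim 1
  have hc1 : k * (Ychain G M 0).card ≤ (k - 1) * (Ychain G M 1).card :=
    claim1 hreg hM (hcov 1 rfl hK1)
  have hY1le : (Ychain G M 1).card ≤ k * (Ychain G M 0).card := Y1_le_k_Y0 hreg
  -- main induction
  have hP : ∀ m : ℕ, 2 * m + 1 ≤ K →
      (2 * k + 2 * m) * (Ychain G M 1).card ≤ 2 * k * (Ychain G M (2 * m + 1)).card := by
    intro m
    induction m with
    | zero => intro _; norm_num
    | succ n ihn =>
      intro hle
      have h1 : 2 * n + 1 ≤ K := by omega
      have hcs := count_step hreg hM (j := 2 * n + 1) (by omega)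
        (by rw [show 2 * n + 1 + 2 = 2 * (n + 1) + 1 by ring]; exact hsub (n + 1) hle)
        (hcov (2 * n + 1) (by omega) h1)
      rw [show 2 * n + 1 + 2 = 2 * (n + 1) + 1 by ring] at hcs
      have ihn' := ihn h1
      nlinarith [hY1le, hcs, ihn']
  refine ⟨hc1, ?_, ?_⟩
  · intro i hi h1i hiK
    obtain ⟨m, rfl⟩ : ∃ m, i = 2 * m + 1 := ⟨i / 2, by omega⟩
    have := hP m hiK
    have he : 2 * m + 1 - 1 = 2 * m := by omega
    rw [he]
    exact this
  · obtain ⟨m, rfl⟩ : ∃ m, K = 2 * m + 1 := ⟨K / 2, by omega⟩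
    have hPK := hP m le_rfl
    have hkp1 : (k + 1) * (Ychain G M 0).card ≤ k * (Ychain G M 1).card := by
      refine Nat.le_of_mul_le_mul_left ?_ (show 0 < k by omega)
      calc k * ((k + 1) * (Ychain G M 0).card)
          = (k + 1) * (k * (Ychain G M 0).card) := by ring
        _ ≤ (k + 1) * ((k - 1) * (Ychain G M 1).card) := Nat.mul_le_mul_left _ hc1
        _ ≤ k * (k * (Ychain G M 1).card) := by
            have : (k + 1) * (k - 1) ≤ k * k := by
              obtain ⟨k', rfl⟩ : ∃ k', k = k' + 2 := ⟨k - 2, by omega⟩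
              simp; nlinarith
            calc (k + 1) * ((k - 1) * (Ychain G M 1).card)
                = ((k + 1) * (k - 1)) * (Ychain G M 1).card := by ring
              _ ≤ (k * k) * (Ychain G M 1).card := Nat.mul_le_mul_right _ this
              _ = k * (k * (Ychain G M 1).card) := by ring
    have he : 2 * m + 1 - 1 = 2 * m := by omega
    rw [he]
    calc (2 * k + 2 * m) * (k + 1) * (Ychain G M 0).card
        = (2 * k + 2 * m) * ((k + 1) * (Ychain G M 0).card) := by ring
      _ ≤ (2 * k + 2 * m) * (k * (Ychain G M 1).card) := Nat.mul_le_mul_left _ hkp1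
      _ = k * ((2 * k + 2 * m) * (Ychain G M 1).card) := by ring
      _ ≤ k * (2 * k * (Ychain G M (2 * m + 1)).card) := Nat.mul_le_mul_left _ hPK
      _ = 2 * k * k * (Ychain G M (2 * m + 1)).card := by ring
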